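/- Let U : [0,∞) → ℝ be a monotone nonincreasing, differentiable solution of the stationary competitive master equation. If either α ≤ 0, or h(p/ε − c)⁺ ≥ α(r+δ), then U(0) ≥ α. -/
import Mathlib


/-- If `U` is a monotone nonincreasing differentiable solution of the stationary competitive
master equation on `[0,∞)`, and either `α ≤ 0` or `h(p/ε - c)⁺ ≥ α(r+δ)`,
then `U(0) ≥ α`. -/
theorem masterSol_value_at_zero_ge_alpha
    (r δ lam h p ε c α : ℝ)
    (hr : 0 < r) (hδ : 0 < δ) (hlam : 0 < lam) (hh : 0 < h) (hp : 0 < p) (hε : 0 < ε)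
    (U : ℝ → ℝ)
    (hmono : AntitoneOn U (Set.Ici 0))
    (hdiff : ∀ k : ℝ, 0 ≤ k → DifferentiableAt ℝ U k)
    (heq : ∀ k : ℝ, 0 ≤ k →
      -(r + δ) * U k + (lam * (U k - α) - δ * k) * deriv U k
        + h * max (p / (k + ε) - c) 0 = 0)
    (hcase : α ≤ 0 ∨ α * (r + δ) ≤ h * max (p / ε - c) 0) :
    α ≤ U 0 := by
  -- derivative at 0 is nonpositive
  have hd0 : deriv U 0 ≤ 0 := by
    have hdw : HasDerivWithinAt U (deriv U 0) (Set.Ici 0) 0 :=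
      ((hdiff 0 le_rfl).hasDerivAt).hasDerivWithinAt
    have hslope := hasDerivWithinAt_iff_tendsto_slope.mp hdw
    have hset : Set.Ici (0:ℝ) \ {0} = Set.Ioi 0 := by
      ext x; simp [Set.mem_diff, Set.mem_Ici, Set.mem_Ioi, lt_iff_le_and_ne, eq_comm]
    rw [hset] at hslope
    refine le_of_tendsto hslope ?_
    filter_upwards [self_mem_nhdsWithin] with x hx
    have hx0 : (0:ℝ) < x := hx
    have hUx : U x ≤ U 0 := hmono (Set.mem_Ici.mpr le_rfl) (Set.mem_Ici.mpr hx0.le) hx0.le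
    have : slope U 0 x = (U x - U 0) / x := by
      rw [slope_def_field, sub_zero]
    rw [this]
    exact div_nonpos_of_nonpos_of_nonneg (by linarith) hx0.le
  have h0 := heq 0 le_rfl
  simp only [zero_add, mul_zero, sub_zero] at h0
  have hmax : 0 ≤ h * max (p / ε - c) 0 := mul_nonneg hh.le (le_max_right _ _)
  by_contra hlt
  push_neg at hlt
  have hfac : lam * (U 0 - α) ≤ 0 := by nlinarith
  have hprod : 0 ≤ (lam * (U 0 - α)) * deriv U 0 := by
    nlinarith [mul_nonneg (neg_nonneg.2 hfac) (neg_nonneg.2 hd0)]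
  rcases hcase with hα | hα
  · nlinarith
  · nlinarith
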